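/- Let q₀ > 0, α ∈ ℝ, and θ₊ ∈ (0, π) with θ₊ ≠ π/2. Define ξ(x,t) := q₀ x sin θ₊ + (α t / 2) tan θ₊, and define q(x,t) := q₀ e^{i α t} [ cos θ₊ + i sin θ₊ · coth(ξ(x,t)) ] and s(x,t) := (1/2) q₀ α sin θ₊ tan θ₊ · ( 1 - coth²(ξ(x,t)) ) on the open set Ω := { (x,t) : ξ(x,t) ≠ 0 }. Then for all (x,t) ∈ Ω: (i) ∂_x ∂_t q(x,t) + 2 s(x,t) q(x,t) = 0; (ii) ∂_x s(x,t) = -∂_t ( q(x,t) q(-x,-t) ) (note (-x,-t) ∈ Ω whenever (x,t) ∈ Ω); and (iii) s(-x,-t) = s(x,t). That is, q is a singular bright one-soliton solution of the nonlocal reverse space-time Sinh-Gordon equation, singular exactly along the space-time line ξ(x,t) = 0. -/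

import Mathlib

/-- Derivative of the hyperbolic cotangent away from the origin. -/
lemma coth_hasDerivAt (coth : ℝ → ℝ)
    (hcoth : ∀ z : ℝ, coth z = Real.cosh z / Real.sinh z)
    {z : ℝ} (hz : z ≠ 0) : HasDerivAt coth (1 - coth z ^ 2) z := by
  have hfun : coth = fun z => Real.cosh z / Real.sinh z := funext hcoth
  have hsz : Real.sinh z ≠ 0 := Real.sinh_ne_zero.mpr hz
  have h : HasDerivAt (fun z => Real.cosh z / Real.sinh z) _ z := (Real.hasDerivAt_cosh z).div (Real.hasDerivAt_sinh z) hsz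
  rw [hfun]
  convert h using 1
  have hc := Real.cosh_sq_sub_sinh_sq z
  field_simp

/-- The hyperbolic cotangent is odd. -/
lemma coth_odd (coth : ℝ → ℝ)
    (hcoth : ∀ z : ℝ, coth z = Real.cosh z / Real.sinh z) (z : ℝ) :
    coth (-z) = -coth z := by
  rw [hcoth, hcoth, Real.cosh_neg, Real.sinh_neg, div_neg]

/-- The singular bright one-soliton `q(x,t) = q₀ e^{iαt}(cos θ₊ + i sin θ₊ coth ξ)`,
`ξ = q₀ x sin θ₊ + (αt/2) tan θ₊`, with `s = (1/2) q₀ α sin θ₊ tan θ₊ (1 - coth² ξ)`,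
solves the nonlocal reverse space-time Sinh-Gordon equation on the open set
`Ω = {ξ ≠ 0}`; moreover `Ω` is invariant under `(x,t) ↦ (-x,-t)` and
`s(-x,-t) = s(x,t)`. -/
theorem rst_sinhGordon_singular_bright_one_soliton (q₀ α θp : ℝ) (hq₀ : 0 < q₀)
    (hθ : θp ∈ Set.Ioo 0 Real.pi) (hθ' : θp ≠ Real.pi / 2)
    (coth : ℝ → ℝ) (hcoth : ∀ z : ℝ, coth z = Real.cosh z / Real.sinh z)
    (ξ : ℝ → ℝ → ℝ)
    (hξ : ∀ x t : ℝ, ξ x t = q₀ * x * Real.sin θp + α * t / 2 * Real.tan θp)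
    (q s : ℝ → ℝ → ℂ)
    (hq : ∀ x t : ℝ, q x t =
      (q₀ : ℂ) * Complex.exp (Complex.I * (α : ℂ) * (t : ℂ)) *
        ((Real.cos θp : ℂ) + Complex.I * (Real.sin θp : ℂ) * ((coth (ξ x t) : ℝ) : ℂ)))
    (hs : ∀ x t : ℝ, s x t =
      ((1 / 2 * q₀ * α * Real.sin θp * Real.tan θp * (1 - coth (ξ x t) ^ 2) : ℝ) : ℂ)) :
    (∀ x t : ℝ, ξ x t ≠ 0 → ξ (-x) (-t) ≠ 0) ∧
    (∀ x t : ℝ, ξ x t ≠ 0 →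
      deriv (fun y : ℝ => deriv (fun τ : ℝ => q y τ) t) x + 2 * s x t * q x t = 0) ∧
    (∀ x t : ℝ, ξ x t ≠ 0 →
      deriv (fun y : ℝ => s y t) x = -deriv (fun τ : ℝ => q x τ * q (-x) (-τ)) t) ∧
    (∀ x t : ℝ, ξ x t ≠ 0 → s (-x) (-t) = s x t) := by
  obtain ⟨hθ1, hθ2⟩ := hθ
  -- cos θp ≠ 0
  have hcos : Real.cos θp ≠ 0 := by
    rcases lt_or_gt_of_ne hθ' with h | h
    · exact ne_of_gt (Real.cos_pos_of_mem_Ioo ⟨by linarith [Real.pi_pos], h⟩)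
    · exact ne_of_lt (Real.cos_neg_of_pi_div_two_lt_of_lt h (by linarith [Real.pi_pos]))
  have hsin : Real.sin θp ≠ 0 := ne_of_gt (Real.sin_pos_of_pos_of_lt_pi hθ1 hθ2)
  set a : ℝ := q₀ * Real.sin θp with ha
  set b : ℝ := α / 2 * Real.tan θp with hb
  have hξab : ∀ x t : ℝ, ξ x t = a * x + b * t := by
    intro x t; rw [hξ, ha, hb]; ring
  have hξneg : ∀ x t : ℝ, ξ (-x) (-t) = -(ξ x t) := by
    intro x t; rw [hξab, hξab]; ring
  -- derivatives of ξ
  have hξx : ∀ (x t : ℝ), HasDerivAt (fun y : ℝ => ξ y t) a x := by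
    intro x t
    have : (fun y : ℝ => ξ y t) = fun y => a * y + b * t := funext fun y => hξab y t
    rw [this]
    simpa using ((hasDerivAt_id x).const_mul a).add_const (b * t)
  have hξt : ∀ (x t : ℝ), HasDerivAt (fun τ : ℝ => ξ x τ) b t := by
    intro x t
    have : (fun τ : ℝ => ξ x τ) = fun τ => a * x + b * τ := funext fun τ => hξab x τ
    rw [this]
    simpa using (((hasDerivAt_id t).const_mul b).const_add (a * x))
  -- derivatives of coth ∘ ξ
  have hCx : ∀ (x t : ℝ), ξ x t ≠ 0 →
      HasDerivAt (fun y : ℝ => coth (ξ y t)) ((1 - coth (ξ x t) ^ 2) * a) x := by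
    intro x t h
    exact (coth_hasDerivAt coth hcoth h).comp x (hξx x t)
  have hCt : ∀ (x t : ℝ), ξ x t ≠ 0 →
      HasDerivAt (fun τ : ℝ => coth (ξ x τ)) ((1 - coth (ξ x t) ^ 2) * b) t := by
    intro x t h
    exact (coth_hasDerivAt coth hcoth h).comp t (hξt x t)
  -- derivative of the exponential factor
  have hE : ∀ t : ℝ, HasDerivAt (fun τ : ℝ => Complex.exp (Complex.I * (α : ℂ) * (τ : ℂ)))
      (Complex.I * (α : ℂ) * Complex.exp (Complex.I * (α : ℂ) * (t : ℂ))) t := by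
    intro t
    have h1 : HasDerivAt (fun τ : ℝ => Complex.I * (α : ℂ) * (τ : ℂ))
        (Complex.I * (α : ℂ)) t := by
      simpa using (Complex.ofRealCLM.hasDerivAt (x := t)).const_mul (Complex.I * (α : ℂ))
    simpa [mul_comm] using h1.cexp
  -- t-derivative of q
  have hqt : ∀ (y t : ℝ), ξ y t ≠ 0 →
      HasDerivAt (fun τ : ℝ => q y τ)
        ((q₀ : ℂ) * (Complex.I * (α : ℂ) * Complex.exp (Complex.I * (α : ℂ) * (t : ℂ)) *
            ((Real.cos θp : ℂ) + Complex.I * (Real.sin θp : ℂ) * ((coth (ξ y t) : ℝ) : ℂ)) +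
          Complex.exp (Complex.I * (α : ℂ) * (t : ℂ)) *
            (Complex.I * (Real.sin θp : ℂ) * (((1 - coth (ξ y t) ^ 2) * b : ℝ) : ℂ)))) t := by
    intro y t h
    have hfun : (fun τ : ℝ => q y τ) = fun τ : ℝ =>
        (q₀ : ℂ) * (Complex.exp (Complex.I * (α : ℂ) * (τ : ℂ)) *
          ((Real.cos θp : ℂ) + Complex.I * (Real.sin θp : ℂ) * ((coth (ξ y τ) : ℝ) : ℂ))) := by
      funext τ; rw [hq]; ring
    rw [hfun]
    have hA : HasDerivAt (fun τ : ℝ =>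
        (Real.cos θp : ℂ) + Complex.I * (Real.sin θp : ℂ) * ((coth (ξ y τ) : ℝ) : ℂ))
        (Complex.I * (Real.sin θp : ℂ) * (((1 - coth (ξ y t) ^ 2) * b : ℝ) : ℂ)) t := by
      exact (((hCt y t h).ofReal_comp).const_mul
        (Complex.I * (Real.sin θp : ℂ))).const_add (Real.cos θp : ℂ)
    exact ((hE t).mul hA).const_mul (q₀ : ℂ)
  constructor
  · -- Ω invariant
    intro x t h
    rw [hξneg]
    exact neg_ne_zero.mpr h
  refine ⟨?_, ?_, ?_⟩
  · -- the PDE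
    intro x t h
    set C : ℝ := coth (ξ x t) with hC
    -- x-derivative of the t-derivative formula
    have hD : HasDerivAt (fun y : ℝ =>
        (q₀ : ℂ) * (Complex.I * (α : ℂ) * Complex.exp (Complex.I * (α : ℂ) * (t : ℂ)) *
            ((Real.cos θp : ℂ) + Complex.I * (Real.sin θp : ℂ) * ((coth (ξ y t) : ℝ) : ℂ)) +
          Complex.exp (Complex.I * (α : ℂ) * (t : ℂ)) *
            (Complex.I * (Real.sin θp : ℂ) * (((1 - coth (ξ y t) ^ 2) * b : ℝ) : ℂ))))
        ((q₀ : ℂ) * (Complex.I * (α : ℂ) * Complex.exp (Complex.I * (α : ℂ) * (t : ℂ)) *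
            (Complex.I * (Real.sin θp : ℂ) * (((1 - C ^ 2) * a : ℝ) : ℂ)) +
          Complex.exp (Complex.I * (α : ℂ) * (t : ℂ)) *
            (Complex.I * (Real.sin θp : ℂ) *
              (((-(2 * C ^ 1 * ((1 - C ^ 2) * a))) * b : ℝ) : ℂ)))) x := by
      have h1 : HasDerivAt (fun y : ℝ =>
          (Real.cos θp : ℂ) + Complex.I * (Real.sin θp : ℂ) * ((coth (ξ y t) : ℝ) : ℂ))
          (Complex.I * (Real.sin θp : ℂ) * (((1 - C ^ 2) * a : ℝ) : ℂ)) x :=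
        (((hCx x t h).ofReal_comp).const_mul
          (Complex.I * (Real.sin θp : ℂ))).const_add (Real.cos θp : ℂ)
      have h2 : HasDerivAt (fun y : ℝ => ((1 - coth (ξ y t) ^ 2) * b : ℝ))
          ((-(2 * C ^ 1 * ((1 - C ^ 2) * a))) * b) x := by
        exact (((hCx x t h).pow 2).const_sub 1).mul_const b
      have h2' := (h2.ofReal_comp.const_mul (Complex.I * (Real.sin θp : ℂ))).const_mul
        (Complex.exp (Complex.I * (α : ℂ) * (t : ℂ)))
      have h1' := (h1.const_mul
        (Complex.I * (α : ℂ) * Complex.exp (Complex.I * (α : ℂ) * (t : ℂ))))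
      exact (h1'.add h2').const_mul (q₀ : ℂ)
    -- the inner deriv agrees with the formula near x
    have hcont : Continuous fun y : ℝ => ξ y t := by
      have : (fun y : ℝ => ξ y t) = fun y => a * y + b * t := funext fun y => hξab y t
      rw [this]; fun_prop
    have hev : ∀ᶠ y in nhds x, ξ y t ≠ 0 := hcont.continuousAt.eventually_ne h
    have hinner : (fun y : ℝ => deriv (fun τ : ℝ => q y τ) t) =ᶠ[nhds x] fun y =>
        (q₀ : ℂ) * (Complex.I * (α : ℂ) * Complex.exp (Complex.I * (α : ℂ) * (t : ℂ)) *
            ((Real.cos θp : ℂ) + Complex.I * (Real.sin θp : ℂ) * ((coth (ξ y t) : ℝ) : ℂ)) +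
          Complex.exp (Complex.I * (α : ℂ) * (t : ℂ)) *
            (Complex.I * (Real.sin θp : ℂ) * (((1 - coth (ξ y t) ^ 2) * b : ℝ) : ℂ))) :=
      hev.mono fun y hy => (hqt y t hy).deriv
    have hderiv := (hD.congr_of_eventuallyEq hinner).deriv
    rw [hderiv, hs, hq]
    rw [← hC]
    have htanC : Complex.tan (θp : ℂ) * Complex.cos (θp : ℂ) = Complex.sin (θp : ℂ) := by
      have h0 : Real.tan θp * Real.cos θp = Real.sin θp := by
        rw [Real.tan_eq_sin_div_cos]; field_simp
      exact_mod_cast h0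
    rw [ha, hb]
    push_cast
    linear_combination ((q₀ : ℂ)^2 * Complex.exp (Complex.I * (α : ℂ) * (t : ℂ)) *
        (1 - (C : ℂ)^2) * (α : ℂ) * Complex.sin (θp : ℂ) * Complex.sin (θp : ℂ)) * Complex.I_sq +
      ((q₀ : ℂ)^2 * Complex.exp (Complex.I * (α : ℂ) * (t : ℂ)) *
        (1 - (C : ℂ)^2) * (α : ℂ) * Complex.sin (θp : ℂ)) * htanC
  · -- the nonlocal constraint
    intro x t h
    set C : ℝ := coth (ξ x t) with hC
    -- left-hand side
    have hsf : (fun y : ℝ => s y t) = fun y : ℝ =>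
        ((1 / 2 * q₀ * α * Real.sin θp * Real.tan θp * (1 - coth (ξ y t) ^ 2) : ℝ) : ℂ) :=
      funext fun y => hs y t
    have hL : HasDerivAt (fun y : ℝ =>
        (1 / 2 * q₀ * α * Real.sin θp * Real.tan θp * (1 - coth (ξ y t) ^ 2) : ℝ))
        (1 / 2 * q₀ * α * Real.sin θp * Real.tan θp * (-(2 * C ^ 1 * ((1 - C ^ 2) * a)))) x :=
      (((hCx x t h).pow 2).const_sub 1).const_mul
        (1 / 2 * q₀ * α * Real.sin θp * Real.tan θp)
    -- right-hand side: the product simplifies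
    have hprod : (fun τ : ℝ => q x τ * q (-x) (-τ)) = fun τ : ℝ =>
        (q₀ : ℂ)^2 * ((Real.cos θp : ℂ)^2 +
          (Real.sin θp : ℂ)^2 * ((coth (ξ x τ) ^ 2 : ℝ) : ℂ)) := by
      funext τ
      rw [hq, hq, hξneg, coth_odd coth hcoth]
      have hE2 : Complex.exp (Complex.I * (α : ℂ) * (τ : ℂ)) *
          Complex.exp (Complex.I * (α : ℂ) * -(τ : ℂ)) = 1 := by
        rw [← Complex.exp_add]
        rw [show Complex.I * (α : ℂ) * (τ : ℂ) + Complex.I * (α : ℂ) * -(τ : ℂ) = 0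
          from by ring, Complex.exp_zero]
      push_cast
      linear_combination ((q₀ : ℂ)^2 * (Complex.cos (θp : ℂ) +
          Complex.I * Complex.sin (θp : ℂ) * ((coth (ξ x τ) : ℝ) : ℂ)) *
          (Complex.cos (θp : ℂ) - Complex.I * Complex.sin (θp : ℂ) * ((coth (ξ x τ) : ℝ) : ℂ))) * hE2 -
        (q₀ : ℂ)^2 * Complex.sin (θp : ℂ)^2 * ((coth (ξ x τ) : ℝ) : ℂ)^2 * Complex.I_sq
    have hR : HasDerivAt (fun τ : ℝ =>
        (q₀ : ℂ)^2 * ((Real.cos θp : ℂ)^2 +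
          (Real.sin θp : ℂ)^2 * ((coth (ξ x τ) ^ 2 : ℝ) : ℂ)))
        ((q₀ : ℂ)^2 * ((Real.sin θp : ℂ)^2 *
          ((2 * C ^ 1 * ((1 - C ^ 2) * b) : ℝ) : ℂ))) t := by
      have h1 := ((hCt x t h).pow 2).ofReal_comp
      exact ((h1.const_mul ((Real.sin θp : ℂ)^2)).const_add
        ((Real.cos θp : ℂ)^2)).const_mul ((q₀ : ℂ)^2)
    rw [hsf, hprod, hR.deriv, (hL.ofReal_comp).deriv]
    rw [ha, hb]
    push_cast
    ring
  · -- symmetry of s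
    intro x t h
    rw [hs, hs, hξneg, coth_odd coth hcoth]
    push_cast
    ring
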